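/- Let a ≥ 1, c ≥ 1, b ∈ ℝ, and h ∈ (0,1). Define q_{a,b,c} : ℝ → [0,∞) by q_{a,b,c}(x) = D₀⁻¹·exp(-x²/2) for |x| < 1, q_{a,b,c}(x) = 0 for 1 ≤ |x| < c, and q_{a,b,c}(x) = exp(-a·|x| + b) for |x| ≥ c; define S : ℝ → ℝ by S(x) = x for |x| < c, S(x) = (1-h)·x + a·h for x ≥ c, and S(x) = (1-h)·x - a·h for x ≤ -c. Then Measure.map S (volume.withDensity q_{a,b,c}) = volume.withDensity q_{a',b',c'}, where a' = a/(1-h), b' = b + a²·h/(1-h) - log(1-h), and c' = (1-h)·c + a·h; moreover a' > a ≥ 1 and c' ≥ 1. -/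

import Mathlib

open MeasureTheory

/-- The normalization constant `D₀ = ∫_{-1}^{1} exp(-x²/2) dx + 2 exp(-1/2)`. -/
noncomputable def D₀ : ℝ := (∫ x in (-1 : ℝ)..1, Real.exp (-x ^ 2 / 2)) + 2 * Real.exp (-1 / 2)

/-- The piecewise density of the forward-Euler iterates: Gaussian shape `D₀⁻¹ exp(-x²/2)`
on `|x| < 1`, vanishing on `1 ≤ |x| < c`, and exponential tail `exp(-a|x| + b)`
on `|x| ≥ c`. -/
noncomputable def q (a b c : ℝ) (x : ℝ) : ENNReal :=
  if |x| < 1 then ENNReal.ofReal (D₀⁻¹ * Real.exp (-x ^ 2 / 2))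
  else if |x| < c then 0
  else ENNReal.ofReal (Real.exp (-a * |x| + b))

/-- The forward-Euler pushforward map at a measure with density `q a b c`
(extended as the identity on the null region `1 ≤ |x| < c`). -/
noncomputable def S (a c h : ℝ) (x : ℝ) : ℝ :=
  if |x| < c then x else if c ≤ x then (1 - h) * x + a * h else (1 - h) * x - a * h

/-! ### Auxiliary definitions and lemmas -/

/-- The Gaussian part of the density. -/
noncomputable def gaussD : ℝ → ENNReal := fun x => ENNReal.ofReal (D₀⁻¹ * Real.exp (-x ^ 2 / 2))

/-- The exponential tail of the density. -/
noncomputable def tailD (a b : ℝ) : ℝ → ENNReal :=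
  fun x => ENNReal.ofReal (Real.exp (-a * |x| + b))

lemma q_decomp (a b c : ℝ) (hc : 1 ≤ c) :
    q a b c = fun x => ({x : ℝ | |x| < 1}.indicator gaussD x
      + {x : ℝ | c ≤ x}.indicator (tailD a b) x
      + {x : ℝ | x ≤ -c}.indicator (tailD a b) x) := by
  funext x
  simp only [q, gaussD, tailD, Set.indicator_apply, Set.mem_setOf_eq]
  by_cases h1 : |x| < 1
  · have hx1 := abs_lt.mp h1
    rw [if_pos h1, if_pos h1, if_neg (not_le.mpr (by linarith)),
      if_neg (not_le.mpr (by linarith)), add_zero, add_zero]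
  · by_cases h2 : |x| < c
    · have hx2 := abs_lt.mp h2
      rw [if_neg h1, if_pos h2, if_neg h1, if_neg (not_le.mpr hx2.2),
        if_neg (not_le.mpr hx2.1), add_zero, add_zero]
    · rw [if_neg h1, if_neg h2, if_neg h1]
      push_neg at h1 h2
      rcases le_or_gt 0 x with hx | hx
      · have hax : |x| = x := abs_of_nonneg hx
        rw [if_pos (by rw [hax] at h2; exact h2), if_neg (not_le.mpr (by linarith)),
          add_zero, zero_add]
      · have hax : |x| = -x := abs_of_neg hx
        rw [if_neg (not_le.mpr (by linarith)), if_pos (by rw [hax] at h2; linarith),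
          zero_add, zero_add]

lemma map_withDensity_comp {T : ℝ → ℝ} (hT : MeasurableEmbedding T) {f : ℝ → ENNReal}
    (hf : Measurable f) (μ : Measure ℝ) :
    Measure.map T (μ.withDensity (fun x => f (T x))) = (Measure.map T μ).withDensity f := by
  ext s hs
  rw [hT.map_apply, withDensity_apply _ (hT.measurable hs), withDensity_apply _ hs,
    setLIntegral_map hs hf hT.measurable]

lemma map_affine_volume (k d : ℝ) (hk : 0 < k) :
    Measure.map (fun x => k * x + d) volume = ENNReal.ofReal k⁻¹ • volume := by
  have h1 : (fun x : ℝ => k * x + d) = (fun x : ℝ => x + d) ∘ (fun x : ℝ => k * x) := rfl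
  rw [h1, ← Measure.map_map (measurable_add_const d) (measurable_const_mul k),
    Real.map_volume_mul_left hk.ne', Measure.map_smul,
    map_add_right_eq_self volume d, abs_of_pos (inv_pos.mpr hk)]

lemma affEmb (k d : ℝ) (hk : 0 < k) : MeasurableEmbedding (fun x : ℝ => k * x + d) :=
  (affineHomeomorph k d hk.ne').toMeasurableEquiv.measurableEmbedding

/-- induction step. For `a ≥ 1`, `c ≥ 1`, `b ∈ ℝ`, `h ∈ (0,1)`,
the pushforward of `q a b c · Lebesgue` under `S a c h` is `q a' b' c' · Lebesgue`
with `a' = a/(1-h)`, `b' = b + a²h/(1-h) - log(1-h)`, `c' = (1-h)c + a h`;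
moreover `a' > a ≥ 1` and `c' ≥ 1`. -/
theorem forwardEuler_iterate_density
    (a b c h : ℝ) (ha : 1 ≤ a) (hc : 1 ≤ c) (hh0 : 0 < h) (hh1 : h < 1) :
    Measure.map (S a c h) (volume.withDensity (q a b c)) =
      volume.withDensity
        (q (a / (1 - h)) (b + a ^ 2 * h / (1 - h) - Real.log (1 - h))
          ((1 - h) * c + a * h)) ∧
    a / (1 - h) > a ∧ a ≥ 1 ∧ (1 - h) * c + a * h ≥ 1 := by
  have hk : (0:ℝ) < 1 - h := by linarith
  set a' := a / (1 - h) with ha'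
  set b' := b + a ^ 2 * h / (1 - h) - Real.log (1 - h) with hb'
  set c' := (1 - h) * c + a * h with hc'def
  have hc' : 1 ≤ c' := by rw [hc'def]; nlinarith
  have hA : MeasurableSet {x : ℝ | |x| < 1} := measurableSet_lt measurable_abs measurable_const
  have hB : MeasurableSet {x : ℝ | c ≤ x} := measurableSet_le measurable_const measurable_id
  have hC : MeasurableSet {x : ℝ | x ≤ -c} := measurableSet_le measurable_id measurable_const
  have hB' : MeasurableSet {x : ℝ | c' ≤ x} := measurableSet_le measurable_const measurable_id
  have hC' : MeasurableSet {x : ℝ | x ≤ -c'} := measurableSet_le measurable_id measurable_const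
  have hGm : Measurable gaussD := by
    unfold gaussD; exact ENNReal.measurable_ofReal.comp (by fun_prop)
  have htm : ∀ u v : ℝ, Measurable (tailD u v) := by
    intro u v; unfold tailD; exact ENNReal.measurable_ofReal.comp (by fun_prop)
  have hSm : Measurable (S a c h) := by
    unfold S
    refine Measurable.ite (measurableSet_lt measurable_abs measurable_const) measurable_id ?_
    exact Measurable.ite (measurableSet_le measurable_const measurable_id)
      (by fun_prop) (by fun_prop)
  refine ⟨?_, by rw [ha', gt_iff_lt, lt_div_iff₀ hk]; nlinarith, ha, hc'⟩
  have expand : ∀ f g h' : ℝ → ENNReal, Measurable f → Measurable g → Measurable h' →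
      (volume.withDensity fun x => f x + g x + h' x)
        = volume.withDensity f + volume.withDensity g + volume.withDensity h' := by
    intro f g h' hf hg hh
    rw [show (fun x => f x + g x + h' x) = (f + g) + h' from rfl,
      withDensity_add_left (show Measurable (f + g) from hf.add hg),
      withDensity_add_left hf]
  -- the three pieces
  have piece1 : Measure.map (S a c h) (volume.withDensity ({x : ℝ | |x| < 1}.indicator gaussD))
      = volume.withDensity ({x : ℝ | |x| < 1}.indicator gaussD) := by
    rw [withDensity_indicator hA]
    have hae : S a c h =ᵐ[(volume.restrict {x : ℝ | |x| < 1}).withDensity gaussD] id := by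
      refine ((ae_restrict_mem hA).filter_mono (withDensity_absolutelyContinuous _ _).ae_le).mono ?_
      intro x hx
      simp only [Set.mem_setOf_eq] at hx
      simp only [S, id_eq, if_pos (lt_of_lt_of_le hx hc)]
    rw [Measure.map_congr hae, Measure.map_id]
  have hf2 : Measurable ({y : ℝ | c' ≤ y}.indicator
      (fun y => ENNReal.ofReal (Real.exp (-a' * y + (b + a ^ 2 * h / (1 - h)))))) :=
    Measurable.indicator (ENNReal.measurable_ofReal.comp (by fun_prop)) hB'
  have hf3 : Measurable ({y : ℝ | y ≤ -c'}.indicator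
      (fun y => ENNReal.ofReal (Real.exp (a' * y + (b + a ^ 2 * h / (1 - h)))))) :=
    Measurable.indicator (ENNReal.measurable_ofReal.comp (by fun_prop)) hC'
  have piece2 : Measure.map (S a c h)
        (volume.withDensity ({x : ℝ | c ≤ x}.indicator (tailD a b)))
      = volume.withDensity ({x : ℝ | c' ≤ x}.indicator (tailD a' b')) := by
    have hTemb : MeasurableEmbedding (fun x : ℝ => (1 - h) * x + a * h) := affEmb _ _ hk
    have hmapT : Measure.map (S a c h)
          (volume.withDensity ({x : ℝ | c ≤ x}.indicator (tailD a b)))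
        = Measure.map (fun x : ℝ => (1 - h) * x + a * h)
          (volume.withDensity ({x : ℝ | c ≤ x}.indicator (tailD a b))) := by
      rw [withDensity_indicator hB]
      refine Measure.map_congr ?_
      refine ((ae_restrict_mem hB).filter_mono (withDensity_absolutelyContinuous _ _).ae_le).mono ?_
      intro x hx
      simp only [Set.mem_setOf_eq] at hx
      have h1 : ¬ |x| < c := not_lt.mpr (le_trans hx (le_abs_self x))
      simp only [S, if_neg h1, if_pos hx]
    have hcomp : ({x : ℝ | c ≤ x}.indicator (tailD a b))
        = fun x => ({y : ℝ | c' ≤ y}.indicator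
            (fun y => ENNReal.ofReal (Real.exp (-a' * y + (b + a ^ 2 * h / (1 - h)))))
            ((1 - h) * x + a * h)) := by
      funext x
      simp only [Set.indicator_apply, Set.mem_setOf_eq, tailD]
      have hiff : c' ≤ (1 - h) * x + a * h ↔ c ≤ x := by
        rw [hc'def]; constructor <;> intro hx <;> nlinarith
      by_cases hx : c ≤ x
      · rw [if_pos hx, if_pos (hiff.mpr hx)]
        have h0x : (0:ℝ) ≤ x := le_trans (by linarith) hx
        rw [abs_of_nonneg h0x]
        congr 1
        rw [ha']
        congr 1
        field_simp
        ring
      · rw [if_neg hx, if_neg (fun hcon => hx (hiff.mp hcon))]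
    rw [hmapT, hcomp, map_withDensity_comp hTemb hf2 volume, map_affine_volume _ _ hk,
      withDensity_smul_measure, ← withDensity_smul _ hf2]
    congr 1
    funext y
    simp only [Pi.smul_apply, smul_eq_mul, Set.indicator_apply, Set.mem_setOf_eq, tailD]
    by_cases hy : c' ≤ y
    · rw [if_pos hy, if_pos hy]
      have h0y : (0:ℝ) ≤ y := le_trans (by linarith) hy
      rw [abs_of_nonneg h0y, ← ENNReal.ofReal_mul (le_of_lt (inv_pos.mpr hk))]
      congr 1
      rw [show -a' * y + b' = (-a' * y + (b + a ^ 2 * h / (1 - h))) - Real.log (1 - h) from by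
        rw [hb']; ring, Real.exp_sub, Real.exp_log hk]
      ring
    · rw [if_neg hy, if_neg hy, mul_zero]
  have piece3 : Measure.map (S a c h)
        (volume.withDensity ({x : ℝ | x ≤ -c}.indicator (tailD a b)))
      = volume.withDensity ({x : ℝ | x ≤ -c'}.indicator (tailD a' b')) := by
    have hTemb : MeasurableEmbedding (fun x : ℝ => (1 - h) * x + -(a * h)) :=
      affEmb _ _ hk
    have hmapT : Measure.map (S a c h)
          (volume.withDensity ({x : ℝ | x ≤ -c}.indicator (tailD a b)))
        = Measure.map (fun x : ℝ => (1 - h) * x + -(a * h))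
          (volume.withDensity ({x : ℝ | x ≤ -c}.indicator (tailD a b))) := by
      rw [withDensity_indicator hC]
      refine Measure.map_congr ?_
      refine ((ae_restrict_mem hC).filter_mono (withDensity_absolutelyContinuous _ _).ae_le).mono ?_
      intro x hx
      simp only [Set.mem_setOf_eq] at hx
      have h1 : ¬ |x| < c := not_lt.mpr (le_trans (by linarith) (neg_le_abs x))
      have h2 : ¬ c ≤ x := not_le.mpr (by linarith)
      simp only [S, if_neg h1, if_neg h2]
      ring
    have hcomp : ({x : ℝ | x ≤ -c}.indicator (tailD a b))
        = fun x => ({y : ℝ | y ≤ -c'}.indicator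
            (fun y => ENNReal.ofReal (Real.exp (a' * y + (b + a ^ 2 * h / (1 - h)))))
            ((1 - h) * x + -(a * h))) := by
      funext x
      simp only [Set.indicator_apply, Set.mem_setOf_eq, tailD]
      have hiff : (1 - h) * x + -(a * h) ≤ -c' ↔ x ≤ -c := by
        rw [hc'def]; constructor <;> intro hx <;> nlinarith
      by_cases hx : x ≤ -c
      · rw [if_pos hx, if_pos (hiff.mpr hx)]
        have h0x : x < 0 := lt_of_le_of_lt hx (by linarith)
        rw [abs_of_neg h0x]
        congr 1
        rw [ha']
        congr 1
        field_simp
        ring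
      · rw [if_neg hx, if_neg (fun hcon => hx (hiff.mp hcon))]
    rw [hmapT, hcomp, map_withDensity_comp hTemb hf3 volume, map_affine_volume _ _ hk,
      withDensity_smul_measure, ← withDensity_smul _ hf3]
    congr 1
    funext y
    simp only [Pi.smul_apply, smul_eq_mul, Set.indicator_apply, Set.mem_setOf_eq, tailD]
    by_cases hy : y ≤ -c'
    · rw [if_pos hy, if_pos hy]
      have h0y : y ≤ 0 := le_trans hy (by linarith)
      rw [abs_of_nonpos h0y, ← ENNReal.ofReal_mul (le_of_lt (inv_pos.mpr hk))]
      congr 1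
      rw [show -a' * -y + b' = (a' * y + (b + a ^ 2 * h / (1 - h))) - Real.log (1 - h) from by
        rw [hb']; ring, Real.exp_sub, Real.exp_log hk]
      ring
    · rw [if_neg hy, if_neg hy, mul_zero]
  rw [q_decomp a b c hc, q_decomp a' b' c' hc',
    expand _ _ _ (hGm.indicator hA) ((htm a b).indicator hB) ((htm a b).indicator hC),
    expand _ _ _ (hGm.indicator hA) ((htm a' b').indicator hB') ((htm a' b').indicator hC'),
    Measure.map_add _ _ hSm, Measure.map_add _ _ hSm, piece1, piece2, piece3]
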